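/- Let Π₁ and Π₂ be two projections on a finite-dimensional complex Hilbert space H. Then H decomposes as an orthogonal direct sum H = ⊕_α H_α of subspaces of dimension at most 2 such that each of Π₁, I − Π₁, Π₂, I − Π₂ maps each H_α into itself. -/

import Mathlib

open scoped InnerProductSpace

section Aux

variable {H : Type*} [NormedAddCommGroup H] [InnerProductSpace ℂ H] [FiniteDimensional ℂ H]

lemma finrank_span_singleton_le' (a : H) : Module.finrank ℂ (Submodule.span ℂ {a}) ≤ 1 := by
  by_cases ha : a = 0
  · subst ha
    rw [Submodule.span_zero_singleton]; simp
  · rw [finrank_span_singleton ha]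

/-- One step: any nonzero invariant subspace contains a nonzero invariant subspace of
dimension at most 2. -/
lemma jordan_step (P₁ P₂ : H →ₗ[ℂ] H)
    (hi₁ : P₁ ∘ₗ P₁ = P₁) (hi₂ : P₂ ∘ₗ P₂ = P₂)
    (U : Submodule ℂ H) (hU : U ≠ ⊥)
    (h1 : ∀ x ∈ U, P₁ x ∈ U) (h2 : ∀ x ∈ U, P₂ x ∈ U) :
    ∃ W : Submodule ℂ H, W ≠ ⊥ ∧ W ≤ U ∧ Module.finrank ℂ W ≤ 2 ∧
      (∀ x ∈ W, P₁ x ∈ W) ∧ (∀ x ∈ W, P₂ x ∈ W) := by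
  by_cases hS : (U ⊓ LinearMap.range P₁) = ⊥
  · -- P₁ vanishes on U; take an eigenvector of P₂ restricted to U
    have hP₁0 : ∀ x ∈ U, P₁ x = 0 := by
      intro x hx
      have : P₁ x ∈ U ⊓ LinearMap.range P₁ := ⟨h1 x hx, ⟨x, rfl⟩⟩
      simpa [hS] using this
    haveI : Nontrivial U := Submodule.nontrivial_iff_ne_bot.mpr hU
    obtain ⟨μ, hμ⟩ := Module.End.exists_eigenvalue (P₂.restrict h2)
    obtain ⟨v, hv⟩ := hμ.exists_hasEigenvector
    have hvne : (v : H) ≠ 0 := by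
      simpa [Submodule.coe_eq_zero] using hv.2
    have hP₂v : P₂ (v : H) = μ • (v : H) := by
      have := hv.apply_eq_smul
      calc P₂ (v : H) = ((P₂.restrict h2) v : H) := rfl
        _ = μ • (v : H) := by rw [this]; rfl
    refine ⟨Submodule.span ℂ {(v : H)}, ?_, ?_, ?_, ?_, ?_⟩
    · simpa [Submodule.span_singleton_eq_bot] using hvne
    · rw [Submodule.span_le, Set.singleton_subset_iff]; exact v.2
    · rw [finrank_span_singleton hvne]; omega
    · intro x hx
      obtain ⟨c, rfl⟩ := Submodule.mem_span_singleton.mp hx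
      rw [map_smul, hP₁0 _ v.2, smul_zero]
      exact Submodule.zero_mem _
    · intro x hx
      obtain ⟨c, rfl⟩ := Submodule.mem_span_singleton.mp hx
      rw [map_smul, hP₂v]
      exact Submodule.smul_mem _ _ (Submodule.smul_mem _ _ (Submodule.mem_span_singleton_self _))
  · -- S = U ⊓ range P₁ ≠ ⊥; take an eigenvector of P₁ ∘ P₂ restricted to S
    set S := U ⊓ LinearMap.range P₁ with hSdef
    have hmaps : ∀ x ∈ S, (P₁ ∘ₗ P₂) x ∈ S := by
      intro x hx
      exact ⟨h1 _ (h2 _ hx.1), ⟨P₂ x, rfl⟩⟩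
    haveI : Nontrivial S := Submodule.nontrivial_iff_ne_bot.mpr hS
    obtain ⟨lam, hlam⟩ := Module.End.exists_eigenvalue ((P₁ ∘ₗ P₂).restrict hmaps)
    obtain ⟨v, hv⟩ := hlam.exists_hasEigenvector
    have hvne : (v : H) ≠ 0 := by
      simpa [Submodule.coe_eq_zero] using hv.2
    have hvU : (v : H) ∈ U := v.2.1
    have hP₁v : P₁ (v : H) = (v : H) := by
      obtain ⟨u, hu⟩ := v.2.2
      rw [← hu]
      exact DFunLike.congr_fun hi₁ u
    have hlamv : P₁ (P₂ (v : H)) = lam • (v : H) := by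
      have := hv.apply_eq_smul
      calc P₁ (P₂ (v : H)) = (((P₁ ∘ₗ P₂).restrict hmaps) v : H) := rfl
        _ = lam • (v : H) := by rw [this]; rfl
    have hP₂P₂v : P₂ (P₂ (v : H)) = P₂ (v : H) := DFunLike.congr_fun hi₂ (v : H)
    refine ⟨Submodule.span ℂ {(v : H), P₂ (v : H)}, ?_, ?_, ?_, ?_, ?_⟩
    · intro hbot
      exact hvne (by
        have : (v : H) ∈ Submodule.span ℂ {(v : H), P₂ (v : H)} :=
          Submodule.subset_span (by simp)
        simpa [hbot] using this)
    · rw [Submodule.span_le]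
      intro x hx
      rcases hx with rfl | hx
      · exact hvU
      · simp only [Set.mem_singleton_iff] at hx; subst hx; exact h2 _ hvU
    · have hins : Submodule.span ℂ {(v : H), P₂ (v : H)} =
          Submodule.span ℂ {(v : H)} ⊔ Submodule.span ℂ {P₂ (v : H)} :=
        Submodule.span_insert _ _
      rw [hins]
      have := Submodule.finrank_add_le_finrank_add_finrank
        (Submodule.span ℂ {(v : H)}) (Submodule.span ℂ {P₂ (v : H)})
      have e1 := finrank_span_singleton_le' (H := H) (v : H)
      have e2 := finrank_span_singleton_le' (H := H) (P₂ (v : H))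
      omega
    · intro x hx
      obtain ⟨c, d, rfl⟩ := Submodule.mem_span_pair.mp hx
      rw [map_add, map_smul, map_smul, hP₁v, hlamv]
      refine Submodule.add_mem _ ?_ ?_
      · exact Submodule.smul_mem _ _ (Submodule.subset_span (by simp))
      · exact Submodule.smul_mem _ _ (Submodule.smul_mem _ _ (Submodule.subset_span (by simp)))
    · intro x hx
      obtain ⟨c, d, rfl⟩ := Submodule.mem_span_pair.mp hx
      rw [map_add, map_smul, map_smul, hP₂P₂v]
      refine Submodule.add_mem _ ?_ ?_ <;>
        exact Submodule.smul_mem _ _ (Submodule.subset_span (by simp))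

/-- Inductive decomposition of an invariant subspace. -/
lemma jordan_aux (P₁ P₂ : H →ₗ[ℂ] H) (hs₁ : P₁.IsSymmetric) (hs₂ : P₂.IsSymmetric)
    (hi₁ : P₁ ∘ₗ P₁ = P₁) (hi₂ : P₂ ∘ₗ P₂ = P₂) :
    ∀ (n : ℕ) (U : Submodule ℂ H), Module.finrank ℂ U ≤ n →
      (∀ x ∈ U, P₁ x ∈ U) → (∀ x ∈ U, P₂ x ∈ U) →
      ∃ (k : ℕ) (V : Fin k → Submodule ℂ H),
        (⨆ i, V i) = U ∧
        (∀ i j, i ≠ j → ∀ x ∈ V i, ∀ y ∈ V j, ⟪x, y⟫_ℂ = 0) ∧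
        (∀ i, Module.finrank ℂ (V i) ≤ 2) ∧
        (∀ i, ∀ x ∈ V i, P₁ x ∈ V i ∧ P₂ x ∈ V i) := by
  intro n
  induction n with
  | zero =>
    intro U hU _ _
    have : U = ⊥ := Submodule.finrank_eq_zero.mp (Nat.le_zero.mp hU)
    exact ⟨0, Fin.elim0, by simp [this], fun i => i.elim0, fun i => i.elim0, fun i => i.elim0⟩
  | succ n ih =>
    intro U hU h1 h2
    by_cases hbot : U = ⊥
    · exact ⟨0, Fin.elim0, by simp [hbot], fun i => i.elim0, fun i => i.elim0, fun i => i.elim0⟩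
    obtain ⟨W, hWne, hWU, hWrk, hW1, hW2⟩ := jordan_step P₁ P₂ hi₁ hi₂ U hbot h1 h2
    set U' := U ⊓ Wᗮ with hU'def
    have hU'1 : ∀ x ∈ U', P₁ x ∈ U' := by
      intro x hx
      refine ⟨h1 _ hx.1, ?_⟩
      intro w hw
      rw [← hs₁ w x]
      exact hx.2 _ (hW1 _ hw)
    have hU'2 : ∀ x ∈ U', P₂ x ∈ U' := by
      intro x hx
      refine ⟨h2 _ hx.1, ?_⟩
      intro w hw
      rw [← hs₂ w x]
      exact hx.2 _ (hW2 _ hw)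
    have hlt : U' < U := by
      refine lt_of_le_of_ne inf_le_left (fun h => hWne ?_)
      have hWle : W ≤ Wᗮ := le_trans hWU (h ▸ inf_le_right)
      exact (Submodule.orthogonal_disjoint W).eq_bot_of_le hWle
    have hU'rk : Module.finrank ℂ U' ≤ n := by
      have := Submodule.finrank_lt_finrank_of_lt hlt
      omega
    obtain ⟨k, V, hsup, horth, hrk, hinv⟩ := ih U' hU'rk hU'1 hU'2
    have hVle : ∀ i, V i ≤ U' := fun i => hsup ▸ le_iSup V i
    refine ⟨k + 1, Fin.cons W V, ?_, ?_, ?_, ?_⟩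
    · apply le_antisymm
      · apply iSup_le
        intro i
        refine Fin.cases ?_ ?_ i
        · simpa using hWU
        · intro j; simpa using le_trans (hVle j) inf_le_left
      · intro x hx
        obtain ⟨y, hy, z, hz, rfl⟩ := W.exists_add_mem_mem_orthogonal x
        have hzU' : z ∈ U' := ⟨by
          have : y ∈ U := hWU hy
          have := Submodule.sub_mem U hx this
          simpa using this, hz⟩
        have hy' : y ∈ ⨆ i, Fin.cons W V i := by
          have : W ≤ ⨆ i, Fin.cons W V i := by
            simpa using le_iSup (Fin.cons W V : Fin (k+1) → Submodule ℂ H) 0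
          exact this hy
        have hz' : z ∈ ⨆ i, Fin.cons W V i := by
          have hle : U' ≤ ⨆ i, Fin.cons W V i := by
            rw [← hsup]
            apply iSup_le
            intro j
            have hcs : (Fin.cons W V : Fin (k+1) → Submodule ℂ H) j.succ = V j :=
              Fin.cons_succ _ _ _
            exact le_trans hcs.ge (le_iSup (Fin.cons W V : Fin (k+1) → Submodule ℂ H) j.succ)
          exact hle hzU'
        exact Submodule.add_mem _ hy' hz'
    · intro i j
      induction i using Fin.cases with
      | zero =>
        induction j using Fin.cases with
        | zero => intro h; exact absurd rfl h
        | succ j' =>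
          intro _ x hx y hy
          rw [Fin.cons_zero] at hx
          rw [Fin.cons_succ] at hy
          exact (hVle j' hy).2 x hx
      | succ i' =>
        induction j using Fin.cases with
        | zero =>
          intro _ x hx y hy
          rw [Fin.cons_succ] at hx
          rw [Fin.cons_zero] at hy
          rw [← inner_conj_symm, (hVle i' hx).2 y hy]
          simp
        | succ j' =>
          intro hij x hx y hy
          rw [Fin.cons_succ] at hx hy
          exact horth i' j' (fun h => hij (by rw [h])) x hx y hy
    · intro i
      refine Fin.cases ?_ ?_ i
      · rw [Fin.cons_zero]; exact hWrk
      · intro j; rw [Fin.cons_succ]; exact hrk j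
    · intro i
      refine Fin.cases ?_ ?_ i
      · intro x hx
        simp only [Fin.cons_zero] at hx ⊢
        exact ⟨hW1 x hx, hW2 x hx⟩
      · intro j x hx
        simp only [Fin.cons_succ] at hx ⊢
        exact hinv j x hx

end Aux

/-- Jordan's lemma for two projections: the space decomposes into an
orthogonal direct sum of subspaces of dimension at most 2, each invariant under
`P₁`, `1 − P₁`, `P₂` and `1 − P₂`. -/
theorem jordan_two_projections (H : Type*) [NormedAddCommGroup H]
    [InnerProductSpace ℂ H] [FiniteDimensional ℂ H]
    (P₁ P₂ : H →ₗ[ℂ] H) (hs₁ : P₁.IsSymmetric) (hs₂ : P₂.IsSymmetric)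
    (hi₁ : P₁ ∘ₗ P₁ = P₁) (hi₂ : P₂ ∘ₗ P₂ = P₂) :
    ∃ (ι : Type) (_ : Fintype ι) (_ : DecidableEq ι) (V : ι → Submodule ℂ H),
      DirectSum.IsInternal V ∧
      (∀ α β, α ≠ β → ∀ x ∈ V α, ∀ y ∈ V β, ⟪x, y⟫_ℂ = 0) ∧
      (∀ α, Module.finrank ℂ (V α) ≤ 2) ∧
      (∀ α, ∀ x ∈ V α,
        P₁ x ∈ V α ∧ x - P₁ x ∈ V α ∧
        P₂ x ∈ V α ∧ x - P₂ x ∈ V α) := by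
  obtain ⟨k, V, hsup, horth, hrk, hinv⟩ :=
    jordan_aux P₁ P₂ hs₁ hs₂ hi₁ hi₂ (Module.finrank ℂ (⊤ : Submodule ℂ H)) ⊤ le_rfl
      (fun x _ => Submodule.mem_top) (fun x _ => Submodule.mem_top)
  refine ⟨Fin k, inferInstance, inferInstance, V, ?_, horth, hrk, ?_⟩
  · have hfam : OrthogonalFamily ℂ (fun i => V i) (fun i => (V i).subtypeₗᵢ) := by
      intro i j hij x y
      exact horth i j hij x x.2 y y.2
    exact DirectSum.isInternal_submodule_of_iSupIndep_of_iSup_eq_top hfam.independent hsup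
  · intro α x hx
    obtain ⟨h1, h2⟩ := hinv α x hx
    exact ⟨h1, Submodule.sub_mem _ hx h1, h2, Submodule.sub_mem _ hx h2⟩
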